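/- arXiv:1210.0375 — 3 statements merged into one kernel-verified Lean document; each statement's English description precedes it below -/
import Mathlib

section
/- Let x_1, ..., x_M be points in ℝ^N and let T be an M×M matrix with nonnegative entries t_ij such that for every j, Σ_{i=1}^M t_ij = 1/M. Suppose the set S = {(x_j, x_i) ∈ ℝ^N × ℝ^N : t_ij > 0} is cyclically monotone. Define x̄_j = Σ_{i=1}^M (M t_ij) x_i for j = 1, ..., M (a convex combination of the x_i, since the coefficients M t_ij are nonnegative and sum to 1 over i). Then the set Ŝ = {(x_j, x̄_j) : j = 1, ..., M} is cyclically monotone. -/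
open Finset

/-- A set `S ⊆ ℝ^N × ℝ^N` is cyclically monotone if for every `k ≥ 1` and every
sequence of pairs `(f 0, a 0), ..., (f k, a k)` in `S` (indexed cyclically),
`∑ l, ⟪a l, f (l+1) - f l⟫ ≤ 0`. -/
def CyclicallyMonotone {N : ℕ}
    (S : Set (EuclideanSpace ℝ (Fin N) × EuclideanSpace ℝ (Fin N))) : Prop :=
  ∀ (k : ℕ) (f a : Fin (k + 1) → EuclideanSpace ℝ (Fin N)),
    (∀ l, (f l, a l) ∈ S) →
    ∑ l, (inner ℝ (a l) (f (l + 1) - f l) : ℝ) ≤ 0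

/-- Mixture expansion: a sum of convex combinations equals the corresponding
expectation over product choices. -/
lemma mixture_expand (n : ℕ) {ι : Type*} [Fintype ι] [DecidableEq ι]
    (w c : Fin n → ι → ℝ) (hw : ∀ l, ∑ i, w l i = 1) :
    ∑ l, ∑ i, w l i * c l i
      = ∑ g ∈ Fintype.piFinset (fun _ : Fin n => (univ : Finset ι)),
          (∏ l, w l (g l)) * (∑ l, c l (g l)) := by
  have h1 : ∀ (m : Fin n) (g : Fin n → ι),
      (∏ l, w l (g l)) * c m (g m)
        = ∏ l, (w l (g l) * if l = m then c l (g l) else 1) := by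
    intro m g
    rw [Finset.prod_mul_distrib]
    congr 1
    rw [Finset.prod_ite_eq' Finset.univ m (fun l => c l (g l))]
    simp
  calc ∑ l, ∑ i, w l i * c l i
      = ∑ m : Fin n, ∏ l, ∑ i : ι, (w l i * if l = m then c l i else 1) := by
        apply Finset.sum_congr rfl
        intro m _
        rw [show (∏ l, ∑ i : ι, (w l i * if l = m then c l i else 1))
            = ∏ l, (if l = m then ∑ i, w l i * c l i else 1) from ?_]
        · rw [Finset.prod_ite_eq' Finset.univ m (fun l => ∑ i, w l i * c l i)]
          simp
        · apply Finset.prod_congr rfl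
          intro l _
          split_ifs with h
          · rfl
          · simp [hw l]
    _ = ∑ m : Fin n, ∑ g ∈ Fintype.piFinset (fun _ : Fin n => (univ : Finset ι)),
          ∏ l, (w l (g l) * if l = m then c l (g l) else 1) := by
        apply Finset.sum_congr rfl
        intro m _
        exact Finset.prod_univ_sum _ _
    _ = ∑ g ∈ Fintype.piFinset (fun _ : Fin n => (univ : Finset ι)),
          (∏ l, w l (g l)) * (∑ l, c l (g l)) := by
        rw [Finset.sum_comm]
        apply Finset.sum_congr rfl
        intro g _
        rw [Finset.mul_sum]
        apply Finset.sum_congr rfl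
        intro m _
        exact (h1 m g).symm

theorem cyclically_monotone_of_barycentric_projection
    (N M : ℕ) (hM : 0 < M)
    (x : Fin M → EuclideanSpace ℝ (Fin N))
    (t : Fin M → Fin M → ℝ)
    (ht_nonneg : ∀ i j, 0 ≤ t i j)
    (ht_col : ∀ j, ∑ i, t i j = 1 / M)
    (hS : CyclicallyMonotone {p | ∃ i j, 0 < t i j ∧ p = (x j, x i)})
    (xbar : Fin M → EuclideanSpace ℝ (Fin N))
    (hxbar : ∀ j, xbar j = ∑ i, ((M : ℝ) * t i j) • x i) :
    CyclicallyMonotone {p | ∃ j, p = (x j, xbar j)} := by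
  intro k f a hmem
  choose j hj using hmem
  have hf : ∀ l, f l = x (j l) := fun l => congrArg Prod.fst (hj l)
  have ha : ∀ l, a l = xbar (j l) := fun l => congrArg Prod.snd (hj l)
  have hMpos : (0 : ℝ) < M := by exact_mod_cast hM
  set w : Fin (k + 1) → Fin M → ℝ := fun l i => (M : ℝ) * t i (j l) with hw_def
  set c : Fin (k + 1) → Fin M → ℝ :=
    fun l i => (inner ℝ (x i) (x (j (l + 1)) - x (j l)) : ℝ) with hc_def
  have hw : ∀ l, ∑ i, w l i = 1 := by
    intro l
    simp only [hw_def]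
    rw [← Finset.mul_sum, ht_col]
    field_simp
  have hgoal : ∑ l, (inner ℝ (a l) (f (l + 1) - f l) : ℝ) = ∑ l, ∑ i, w l i * c l i := by
    apply Finset.sum_congr rfl
    intro l _
    rw [ha l, hf l, hf (l + 1), hxbar (j l), sum_inner]
    apply Finset.sum_congr rfl
    intro i _
    rw [real_inner_smul_left]
  rw [hgoal, mixture_expand (k + 1) w c hw]
  apply Finset.sum_nonpos
  intro g _
  have hp : 0 ≤ ∏ l, w l (g l) :=
    Finset.prod_nonneg fun l _ => mul_nonneg hMpos.le (ht_nonneg _ _)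
  rcases hp.eq_or_lt with h0 | hpos
  · rw [← h0, zero_mul]
  · have ht_pos : ∀ l, 0 < t (g l) (j l) := by
      intro l
      by_contra hcon
      have : t (g l) (j l) = 0 := le_antisymm (not_lt.mp hcon) (ht_nonneg _ _)
      have : w l (g l) = 0 := by simp [hw_def, this]
      exact absurd (Finset.prod_eq_zero (Finset.mem_univ l) this) (ne_of_gt hpos)
    have hcs : ∑ l, c l (g l) ≤ 0 := by
      have := hS k (fun l => x (j l)) (fun l => x (g l))
        (fun l => ⟨g l, j l, ht_pos l, rfl⟩)
      simpa [hc_def] using this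
    exact mul_nonpos_of_nonneg_of_nonpos hp hcs
end

section
/- Let x_1, ..., x_M be points in ℝ^N, let p, q ∈ ℝ^M be probability vectors, and let T* be a coupling of p and q that minimizes the expected squared Euclidean distance Σ_{i,j} t_ij ‖x_i − x_j‖² over all couplings of p and q. Then the support set S = {(x_j, x_i) ∈ ℝ^N × ℝ^N : t*_ij > 0} is cyclically monotone. -/
open Finset

/-- `T` is a coupling of the probability vectors `p` and `q`: nonnegative entries,
column sums equal to `p` and row sums equal to `q`. -/
def IsCoupling {M : ℕ} (T : Fin M → Fin M → ℝ) (p q : Fin M → ℝ) : Prop :=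
  (∀ i j, 0 ≤ T i j) ∧ (∀ j, ∑ i, T i j = p j) ∧ (∀ i, ∑ j, T i j = q i)

theorem support_of_optimal_coupling_cyclically_monotone
    (N M : ℕ) (hM : 0 < M)
    (x : Fin M → EuclideanSpace ℝ (Fin N))
    (p q : Fin M → ℝ)
    (hp_nonneg : ∀ j, 0 ≤ p j) (hp_sum : ∑ j, p j = 1)
    (hq_nonneg : ∀ i, 0 ≤ q i) (hq_sum : ∑ i, q i = 1)
    (Tstar : Fin M → Fin M → ℝ)
    (hTstar : IsCoupling Tstar p q)
    (hmin : ∀ T : Fin M → Fin M → ℝ, IsCoupling T p q →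
      ∑ i, ∑ j, Tstar i j * ‖x i - x j‖ ^ 2 ≤ ∑ i, ∑ j, T i j * ‖x i - x j‖ ^ 2) :
    CyclicallyMonotone {s | ∃ i j, 0 < Tstar i j ∧ s = (x j, x i)} := by
  intro k f a hS
  choose i j hpos hfa using hS
  have hf : ∀ l, f l = x (j l) := fun l => congrArg Prod.fst (hfa l)
  have ha : ∀ l, a l = x (i l) := fun l => congrArg Prod.snd (hfa l)
  obtain ⟨hT0, hTcol, hTrow⟩ := hTstar
  set c : Fin M → Fin M → ℝ := fun u v => ‖x u - x v‖ ^ 2 with hc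
  have hne : (univ : Finset (Fin (k+1))).Nonempty := univ_nonempty
  set m : ℝ := univ.inf' hne (fun l => Tstar (i l) (j l)) with hm
  have hmpos : 0 < m := by
    rw [hm, Finset.lt_inf'_iff]
    exact fun l _ => hpos l
  set ε : ℝ := m / (k+1) with hε
  have hεpos : 0 < ε := div_pos hmpos (by positivity)
  have hkε : (k+1 : ℝ) * ε = m := by
    rw [hε]; field_simp
  set D : Fin M → Fin M → ℝ := fun u v =>
    ∑ l : Fin (k+1), ((if u = i l ∧ v = j (l+1) then ε else 0)
      - (if u = i l ∧ v = j l then ε else 0)) with hD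
  -- cyclic shift sum identity
  have shift : ∀ g : Fin (k+1) → ℝ, ∑ l, g (l+1) = ∑ l, g l :=
    fun g => Fintype.sum_equiv (Equiv.addRight 1) _ _ (fun _ => rfl)
  -- nonnegativity
  have hTnn : ∀ u v, 0 ≤ Tstar u v + D u v := by
    intro u v
    by_cases h : ∃ l, u = i l ∧ v = j l
    · obtain ⟨l0, hu, hv⟩ := h
      have h1 : m ≤ Tstar u v := by
        rw [hu, hv]; exact Finset.inf'_le _ (mem_univ l0)
      have h2 : -((k+1 : ℝ) * ε) ≤ D u v := by
        have hterm : ∀ l : Fin (k+1), -ε ≤ (if u = i l ∧ v = j (l+1) then ε else 0)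
            - (if u = i l ∧ v = j l then ε else 0) := by
          intro l
          have a1 : (0:ℝ) ≤ (if u = i l ∧ v = j (l+1) then ε else 0) := by positivity
          have a2 : (if u = i l ∧ v = j l then ε else 0) ≤ ε := by
            split <;> simp [hεpos.le]
          linarith
        calc -((k+1 : ℝ) * ε) = ∑ _l : Fin (k+1), (-ε) := by
              rw [Finset.sum_const, Finset.card_univ, Fintype.card_fin, nsmul_eq_mul]
              push_cast; ring
          _ ≤ D u v := Finset.sum_le_sum (fun l _ => hterm l)
      linarith
    · push_neg at h
      have h2 : 0 ≤ D u v := Finset.sum_nonneg (fun l _ => by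
        have hB : ¬(u = i l ∧ v = j l) := fun ⟨h1', h2'⟩ => h l h1' h2'
        rw [if_neg hB, sub_zero]; positivity)
      linarith [hT0 u v]
  -- column sums of D vanish
  have hcolD : ∀ v, ∑ u, D u v = 0 := by
    intro v
    rw [Finset.sum_comm]
    have hterm : ∀ l : Fin (k+1),
        ∑ u, ((if u = i l ∧ v = j (l+1) then ε else 0)
          - (if u = i l ∧ v = j l then ε else 0))
        = (if v = j (l+1) then ε else 0) - (if v = j l then ε else 0) := by
      intro l
      rw [Finset.sum_sub_distrib]
      congr 1 <;> simp [ite_and, Finset.sum_ite_eq']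
    rw [Finset.sum_congr rfl (fun l _ => hterm l), Finset.sum_sub_distrib,
      shift (fun l => if v = j l then ε else 0), sub_self]
  -- row sums of D vanish
  have hrowD : ∀ u, ∑ v, D u v = 0 := by
    intro u
    rw [Finset.sum_comm]
    have hterm : ∀ l : Fin (k+1),
        ∑ v, ((if u = i l ∧ v = j (l+1) then ε else 0)
          - (if u = i l ∧ v = j l then ε else 0)) = 0 := by
      intro l
      rw [Finset.sum_sub_distrib]
      have e1 : ∑ v, (if u = i l ∧ v = j (l+1) then ε else 0)
          = (if u = i l then ε else 0) := by simp [ite_and, Finset.sum_ite_eq']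
      have e2 : ∑ v, (if u = i l ∧ v = j l then ε else 0)
          = (if u = i l then ε else 0) := by simp [ite_and, Finset.sum_ite_eq']
      rw [e1, e2, sub_self]
    simp [hterm]
  have key : IsCoupling (fun u v => Tstar u v + D u v) p q := by
    refine ⟨hTnn, fun v => ?_, fun u => ?_⟩
    · rw [Finset.sum_add_distrib, hTcol v, hcolD v, add_zero]
    · rw [Finset.sum_add_distrib, hTrow u, hrowD u, add_zero]
  -- cost difference
  have delta : ∀ (i0 j0 : Fin M) (e : ℝ),
      ∑ u, ∑ v, (if u = i0 ∧ v = j0 then e else 0) * c u v = e * c i0 j0 := by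
    intro i0 j0 e
    simp [ite_and, ite_mul, Finset.sum_ite_eq']
  have hcostD : ∑ u, ∑ v, D u v * c u v
      = ε * ∑ l, (c (i l) (j (l+1)) - c (i l) (j l)) := by
    have : ∀ u v, D u v * c u v
        = ∑ l : Fin (k+1), ((if u = i l ∧ v = j (l+1) then ε else 0) * c u v
          - (if u = i l ∧ v = j l then ε else 0) * c u v) := by
      intro u v
      rw [hD]
      rw [Finset.sum_mul]
      exact Finset.sum_congr rfl (fun l _ => by ring)
    calc ∑ u, ∑ v, D u v * c u v
        = ∑ l : Fin (k+1), ∑ u, ∑ v, ((if u = i l ∧ v = j (l+1) then ε else 0) * c u v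
          - (if u = i l ∧ v = j l then ε else 0) * c u v) := by
          simp_rw [this]
          exact (Finset.sum_congr rfl (fun u _ => Finset.sum_comm)).trans Finset.sum_comm
      _ = ∑ l : Fin (k+1), (ε * c (i l) (j (l+1)) - ε * c (i l) (j l)) := by
          refine Finset.sum_congr rfl (fun l _ => ?_)
          rw [Finset.sum_congr rfl (fun u _ => Finset.sum_sub_distrib _ _),
            Finset.sum_sub_distrib, delta, delta]
      _ = ε * ∑ l, (c (i l) (j (l+1)) - c (i l) (j l)) := by
          rw [Finset.mul_sum]
          exact Finset.sum_congr rfl (fun l _ => by ring)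
  have hmin' := hmin _ key
  have hsumnn : 0 ≤ ∑ l, (c (i l) (j (l+1)) - c (i l) (j l)) := by
    have hexp : ∑ u, ∑ v, (Tstar u v + D u v) * c u v
        = ∑ u, ∑ v, Tstar u v * c u v + ∑ u, ∑ v, D u v * c u v := by
      simp [add_mul, Finset.sum_add_distrib]
    have h0 : 0 ≤ ∑ u, ∑ v, D u v * c u v := by
      have := hmin'
      simp only [hc] at this hexp ⊢
      linarith [hexp ▸ this]
    rw [hcostD] at h0
    exact nonneg_of_mul_nonneg_right h0 hεpos
  -- final algebra
  have hinner : ∀ l : Fin (k+1), (inner ℝ (a l) (f (l+1) - f l) : ℝ)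
      = (‖x (j (l+1))‖^2 - ‖x (j l)‖^2 - (c (i l) (j (l+1)) - c (i l) (j l))) / 2 := by
    intro l
    rw [ha, hf, hf, hc]
    have e1 : ‖x (i l) - x (j (l+1))‖^2
        = ‖x (i l)‖^2 - 2 * inner ℝ (x (i l)) (x (j (l+1))) + ‖x (j (l+1))‖^2 :=
      norm_sub_sq_real _ _
    have e2 : ‖x (i l) - x (j l)‖^2
        = ‖x (i l)‖^2 - 2 * inner ℝ (x (i l)) (x (j l)) + ‖x (j l)‖^2 :=
      norm_sub_sq_real _ _
    rw [inner_sub_right]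
    simp only [e1, e2]
    ring
  have htel : ∑ l, (‖x (j (l+1))‖^2 - ‖x (j l)‖^2 : ℝ) = 0 := by
    rw [Finset.sum_sub_distrib, shift (fun l => ‖x (j l)‖^2), sub_self]
  calc ∑ l, (inner ℝ (a l) (f (l + 1) - f l) : ℝ)
      = ∑ l, (‖x (j (l+1))‖^2 - ‖x (j l)‖^2 - (c (i l) (j (l+1)) - c (i l) (j l))) / 2 :=
        Finset.sum_congr rfl (fun l _ => hinner l)
    _ = (∑ l, (‖x (j (l+1))‖^2 - ‖x (j l)‖^2 : ℝ)
        - ∑ l, (c (i l) (j (l+1)) - c (i l) (j l))) / 2 := by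
        rw [← Finset.sum_sub_distrib, ← Finset.sum_div]
    _ ≤ 0 := by rw [htel]; linarith
end

section
/- Let (Ω, 𝔉, ℙ) be a probability space and let X_1, X_2, ... be independent identically distributed random variables with values in ℝ^N and common law μ. Let L : ℝ^N → [0, ∞) be measurable with 0 < ∫ L dμ < ∞, and let g : ℝ^N → ℝ be measurable with ∫ |g| L dμ < ∞. Then the self-normalized importance sampling estimator converges almost surely: (Σ_{i=1}^M L(X_i) g(X_i)) / (Σ_{i=1}^M L(X_i)) → (∫ g L dμ) / (∫ L dμ) as M → ∞, almost surely on the event where the denominator is eventually positive (which has probability 1). -/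
open MeasureTheory ProbabilityTheory Filter Finset

theorem importance_sampling_estimator_converges
    {Ω : Type*} [MeasurableSpace Ω] (P : Measure Ω) [IsProbabilityMeasure P]
    (N : ℕ)
    (X : ℕ → Ω → EuclideanSpace ℝ (Fin N))
    (hXmeas : ∀ i, Measurable (X i))
    (hXindep : iIndepFun X P)
    (μ : Measure (EuclideanSpace ℝ (Fin N))) [IsProbabilityMeasure μ]
    (hXlaw : ∀ i, Measure.map (X i) P = μ)
    (L : EuclideanSpace ℝ (Fin N) → ℝ)
    (hL_nonneg : ∀ x, 0 ≤ L x)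
    (hL_meas : Measurable L)
    (hL_int : Integrable L μ)
    (hL_pos : 0 < ∫ x, L x ∂μ)
    (g : EuclideanSpace ℝ (Fin N) → ℝ)
    (hg_meas : Measurable g)
    (hgL_int : Integrable (fun x => |g x| * L x) μ) :
    ∀ᵐ ω ∂P, Tendsto
      (fun M : ℕ =>
        (∑ i ∈ Finset.range M, L (X i ω) * g (X i ω)) /
          (∑ i ∈ Finset.range M, L (X i ω)))
      atTop (nhds ((∫ x, g x * L x ∂μ) / (∫ x, L x ∂μ))) := by
  -- auxiliary functions
  set f : EuclideanSpace ℝ (Fin N) → ℝ := fun x => L x * g x with hf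
  have hf_meas : Measurable f := hL_meas.mul hg_meas
  have hf_int : Integrable f μ := by
    refine hgL_int.mono (hf_meas.aestronglyMeasurable) ?_
    filter_upwards with x
    simp [hf, abs_mul, abs_of_nonneg (hL_nonneg x), mul_comm]
  have hident : ∀ i, IdentDistrib (X i) (X 0) P P := fun i =>
    ⟨(hXmeas i).aemeasurable, (hXmeas 0).aemeasurable, by rw [hXlaw i, hXlaw 0]⟩
  have hpair : Pairwise (Function.onFun (IndepFun · · P) X) := fun i j hij =>
    hXindep.indepFun hij
  -- SLLN for f ∘ X
  have hint_f : Integrable (fun ω => f (X 0 ω)) P := by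
    rw [← Function.comp_def, ← integrable_map_measure hf_meas.aestronglyMeasurable
      (hXmeas 0).aemeasurable, hXlaw 0]
    exact hf_int
  have hint_L : Integrable (fun ω => L (X 0 ω)) P := by
    rw [← Function.comp_def, ← integrable_map_measure hL_meas.aestronglyMeasurable
      (hXmeas 0).aemeasurable, hXlaw 0]
    exact hL_int
  have h1 := strong_law_ae_real (fun i ω => f (X i ω)) hint_f
    (fun i j hij => (hpair hij).comp hf_meas hf_meas)
    (fun i => (hident i).comp hf_meas)
  have h2 := strong_law_ae_real (fun i ω => L (X i ω)) hint_L
    (fun i j hij => (hpair hij).comp hL_meas hL_meas)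
    (fun i => (hident i).comp hL_meas)
  have e1 : (∫ ω, f (X 0 ω) ∂P) = ∫ x, f x ∂μ := by
    rw [← hXlaw 0, integral_map (hXmeas 0).aemeasurable hf_meas.aestronglyMeasurable]
  have e2 : (∫ ω, L (X 0 ω) ∂P) = ∫ x, L x ∂μ := by
    rw [← hXlaw 0, integral_map (hXmeas 0).aemeasurable hL_meas.aestronglyMeasurable]
  filter_upwards [h1, h2] with ω h1ω h2ω
  rw [e1] at h1ω
  rw [e2] at h2ω
  have := h1ω.div h2ω (ne_of_gt hL_pos)
  have heq : (∫ x, g x * L x ∂μ) = ∫ x, f x ∂μ := by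
    simp only [hf, mul_comm]
  rw [heq]
  refine this.congr' ?_
  filter_upwards [eventually_ge_atTop 1] with n hn
  have hn' : (n : ℝ) ≠ 0 := Nat.cast_ne_zero.2 (by omega)
  simp only [Pi.div_apply]
  rw [div_div_div_cancel_right₀ hn']
end
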